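/- arXiv:1805.11872 — 2 statements merged into one kernel-verified Lean document; each statement's English description precedes it below -/
import Mathlib

section
/- Let (λ,ψ) be a symmetric non-trivial Bayes–Nash equilibrium of a crowdfunding game Γ(n,B,μ,p,τ) with 2 ≤ B ≤ n. Then: (i) if λ > 0 then ψ = 1; (ii) if ψ < 1 then λ = 0; (iii) if λ < 1 then φ(α_H,n−1,B−1) > φ(α_L,n−1,B−1); and (iv) if λ = 1 then φ(α_H,n−1,B−1) = φ(α_L,n−1,B−1) = 1. -/
open Finset Filter

/-- Upper tail of a Binomial(m,γ): probability of at least `k` successes in `m` trials. -/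
noncomputable def phi (γ : ℝ) (m k : ℕ) : ℝ :=
  ∑ j ∈ Finset.Icc k m, (m.choose j : ℝ) * γ ^ j * (1 - γ) ^ (m - j)

/-- Posterior probability of state H given a low signal. -/
noncomputable def pLow (μ p : ℝ) : ℝ := (1 - p) * μ / ((1 - p) * μ + p * (1 - μ))

/-- Posterior probability of state H given a high signal. -/
noncomputable def pHigh (μ p : ℝ) : ℝ := p * μ / (p * μ + (1 - p) * (1 - μ))

/-- Probability that a player contributes in state H under symmetric strategy (lam, psi). -/
noncomputable def alphaH (p lam psi : ℝ) : ℝ := p * psi + (1 - p) * lam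

/-- Probability that a player contributes in state L under symmetric strategy (lam, psi). -/
noncomputable def alphaL (p lam psi : ℝ) : ℝ := (1 - p) * psi + p * lam

/-- Expected utility of contributing for a low-signal player. -/
noncomputable def Ulow (n B : ℕ) (μ p τ lam psi : ℝ) : ℝ :=
  pLow μ p * (1 - τ) * phi (alphaH p lam psi) (n - 1) (B - 1)
    - (1 - pLow μ p) * τ * phi (alphaL p lam psi) (n - 1) (B - 1)

/-- Expected utility of contributing for a high-signal player. -/
noncomputable def Uhigh (n B : ℕ) (μ p τ lam psi : ℝ) : ℝ :=
  pHigh μ p * (1 - τ) * phi (alphaH p lam psi) (n - 1) (B - 1)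
    - (1 - pHigh μ p) * τ * phi (alphaL p lam psi) (n - 1) (B - 1)

/-- (lam, psi) is a symmetric Bayes–Nash equilibrium of Γ(n,B,μ,p,τ). -/
def IsSymmEq (n B : ℕ) (μ p τ lam psi : ℝ) : Prop :=
  lam ∈ Set.Icc (0:ℝ) 1 ∧ psi ∈ Set.Icc (0:ℝ) 1 ∧
    (0 < lam → 0 ≤ Ulow n B μ p τ lam psi) ∧
    (lam < 1 → Ulow n B μ p τ lam psi ≤ 0) ∧
    (0 < psi → 0 ≤ Uhigh n B μ p τ lam psi) ∧
    (psi < 1 → Uhigh n B μ p τ lam psi ≤ 0)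

/-- The strategy profile (lam, psi) is non-trivial: the good is supplied with
positive probability. -/
def NonTrivial (n B : ℕ) (μ p lam psi : ℝ) : Prop :=
  0 < μ * phi (alphaH p lam psi) n B + (1 - μ) * phi (alphaL p lam psi) n B

/-- The correctness index of Γ(n,B,μ,p,τ) at the symmetric strategy (lam, psi). -/
noncomputable def thetaIdx (n B : ℕ) (μ p lam psi : ℝ) : ℝ :=
  μ * phi (alphaH p lam psi) n B + (1 - μ) * (1 - phi (alphaL p lam psi) n B)

/-- Expected fraction of contributors collected from a Binomial(n,γ) number of
contributors, counted only when the threshold B is met. -/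
noncomputable def tailExp (γ : ℝ) (n B : ℕ) : ℝ :=
  ∑ j ∈ Finset.Icc B n, ((j : ℝ) / n) * (n.choose j : ℝ) * γ ^ j * (1 - γ) ^ (n - j)

/-- The participation index of Γ(n,B,μ,p,τ) at the symmetric strategy (lam, psi). -/
noncomputable def partIdx (n B : ℕ) (μ p lam psi : ℝ) : ℝ :=
  μ * tailExp (alphaH p lam psi) n B + (1 - μ) * tailExp (alphaL p lam psi) n B

lemma phi_nonneg {γ : ℝ} (h0 : 0 ≤ γ) (h1 : γ ≤ 1) (m k : ℕ) : 0 ≤ phi γ m k := by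
  apply Finset.sum_nonneg
  intro j hj
  have hγ : (0:ℝ) ≤ 1 - γ := by linarith
  positivity

lemma phi_pos {γ : ℝ} (h0 : 0 < γ) (h1 : γ ≤ 1) {m k : ℕ} (hkm : k ≤ m) : 0 < phi γ m k := by
  apply Finset.sum_pos'
  · intro j hj
    have hγ : (0:ℝ) ≤ 1 - γ := by linarith
    positivity
  · refine ⟨m, Finset.mem_Icc.mpr ⟨hkm, le_refl m⟩, ?_⟩
    simp only [Nat.choose_self, Nat.cast_one, one_mul, Nat.sub_self, pow_zero, mul_one]
    positivity

lemma phi_zero {m k : ℕ} (hk : 1 ≤ k) : phi 0 m k = 0 := by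
  unfold phi
  apply Finset.sum_eq_zero
  intro j hj
  have hj0 : j ≠ 0 := by simp only [Finset.mem_Icc] at hj; omega
  simp [zero_pow hj0]

lemma phi_one {m k : ℕ} (hkm : k ≤ m) : phi 1 m k = 1 := by
  unfold phi
  rw [Finset.sum_eq_single m]
  · simp
  · intro j hj hjm
    have h : m - j ≠ 0 := by simp only [Finset.mem_Icc] at hj; omega
    norm_num [zero_pow h]
  · intro h; exact absurd (Finset.mem_Icc.mpr ⟨hkm, le_refl m⟩) h

lemma telescope_Icc (T : ℕ → ℝ) {k m : ℕ} (hk : 1 ≤ k) (hkm : k ≤ m) :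
    ∑ j ∈ Finset.Icc k m, (T (j-1) - T j) = T (k-1) - T m := by
  rw [← Finset.Ico_add_one_right_eq_Icc, Finset.sum_Ico_eq_sum_range]
  have h1 : ∑ i ∈ Finset.range (m + 1 - k), (T (k + i - 1) - T (k + i))
      = ∑ i ∈ Finset.range (m + 1 - k),
          ((fun i => T (k + i - 1)) i - (fun i => T (k + i - 1)) (i+1)) := by
    apply Finset.sum_congr rfl
    intro i _
    have h : k + (i + 1) - 1 = k + i := by omega
    simp [h]
  rw [h1, Finset.sum_range_sub']
  have e1 : k + 0 - 1 = k - 1 := by omega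
  have e2 : k + (m + 1 - k) - 1 = m := by omega
  simp only [e1, e2]

lemma hasDerivAt_phi (m k : ℕ) (hk : 1 ≤ k) (hkm : k ≤ m) (x : ℝ) :
    HasDerivAt (fun γ => phi γ m k)
      (((m - (k-1) : ℕ) : ℝ) * (m.choose (k-1) : ℝ) * x ^ (k-1) * (1-x) ^ (m-1-(k-1))) x := by
  set T : ℕ → ℝ := fun j => ((m - j : ℕ) : ℝ) * (m.choose j : ℝ) * x ^ j * (1-x) ^ (m-1-j)
    with hT
  have key : ∀ j : ℕ, HasDerivAt (fun γ : ℝ => (m.choose j : ℝ) * γ ^ j * (1-γ) ^ (m-j))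
      ((m.choose j : ℝ) * (((j:ℝ) * x ^ (j-1)) * (1-x) ^ (m-j)
        + x ^ j * (-(((m-j : ℕ):ℝ) * (1-x) ^ (m-j-1))))) x := by
    intro j
    have h0 : HasDerivAt (fun γ : ℝ => 1 - γ) (-1) x := (hasDerivAt_id x).const_sub 1
    have h1 : HasDerivAt (fun γ : ℝ => (1-γ) ^ (m-j)) (-(((m-j:ℕ):ℝ) * (1-x) ^ (m-j-1))) x := by
      have h := (hasDerivAt_pow (m-j) (1-x)).comp x h0
      simp only [mul_neg, mul_one] at h
      exact h
    have h2 := ((hasDerivAt_pow j x).mul h1).const_mul ((m.choose j : ℝ))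
    have hf : (fun γ : ℝ => (m.choose j : ℝ) * (γ ^ j * (1-γ) ^ (m-j)))
        = fun γ : ℝ => (m.choose j : ℝ) * γ ^ j * (1-γ) ^ (m-j) := by
      funext γ; ring
    simp only [Pi.mul_apply] at h2
    rw [hf] at h2
    convert h2 using 1
  have hsum := HasDerivAt.sum (fun j (_ : j ∈ Finset.Icc k m) => key j)
  have step : ∀ j ∈ Finset.Icc k m, (m.choose j : ℝ) * (((j:ℝ) * x ^ (j-1)) * (1-x) ^ (m-j)
        + x ^ j * (-(((m-j : ℕ):ℝ) * (1-x) ^ (m-j-1)))) = T (j-1) - T j := by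
    intro j hj
    simp only [Finset.mem_Icc] at hj
    obtain ⟨i, rfl⟩ : ∃ i, j = i + 1 := ⟨j - 1, by omega⟩
    have hc : (m.choose (i+1) : ℝ) * ((i:ℕ)+1 : ℝ) = (m.choose i : ℝ) * ((m-i : ℕ):ℝ) := by
      exact_mod_cast congrArg (Nat.cast : ℕ → ℝ) (Nat.choose_succ_right_eq m i)
    simp only [hT]
    have e2 : m - (i+1) - 1 = m - 1 - (i+1) := by omega
    have e1 : m - (i+1) = m - 1 - i := by omega
    have e3 : i + 1 - 1 = i := by omega
    rw [e2] -- second exponent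
    rw [e3]
    rw [show m - (i+1) = m - 1 - i from e1]
    push_cast
    linear_combination (x ^ i * (1-x) ^ (m-1-i)) * hc
  have hval : ∑ j ∈ Finset.Icc k m, ((m.choose j : ℝ) * (((j:ℝ) * x ^ (j-1)) * (1-x) ^ (m-j)
        + x ^ j * (-(((m-j : ℕ):ℝ) * (1-x) ^ (m-j-1))))) = T (k-1) := by
    rw [Finset.sum_congr rfl step, telescope_Icc T hk hkm]
    have hTm : T m = 0 := by simp [hT]
    rw [hTm, sub_zero]
  rw [hval] at hsum
  have hTk : T (k-1) = ((m - (k-1) : ℕ) : ℝ) * (m.choose (k-1) : ℝ) * x ^ (k-1) * (1-x) ^ (m-1-(k-1)) := rfl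
  rw [← hTk]
  have hfun : (fun γ => phi γ m k) = ∑ i ∈ Finset.Icc k m, fun γ : ℝ => (m.choose i : ℝ) * γ ^ i * (1 - γ) ^ (m - i) := by
    funext γ
    simp [phi, Finset.sum_apply]
  rw [hfun]
  exact hsum

lemma phi_strictMonoOn {m k : ℕ} (hk : 1 ≤ k) (hkm : k ≤ m) :
    StrictMonoOn (fun γ => phi γ m k) (Set.Icc (0:ℝ) 1) := by
  apply strictMonoOn_of_deriv_pos (convex_Icc 0 1)
  · apply Continuous.continuousOn
    unfold phi
    exact continuous_finset_sum _ (fun j _ => by fun_prop)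
  · intro x hx
    rw [interior_Icc] at hx
    rw [(hasDerivAt_phi m k hk hkm x).deriv]
    have h1 : 0 < x ^ (k-1) := pow_pos hx.1 _
    have h2 : (0:ℝ) < (1-x) ^ (m-1-(k-1)) := pow_pos (by linarith [hx.2]) _
    have h3 : (0:ℝ) < ((m - (k-1) : ℕ) : ℝ) := by
      have h : 0 < m - (k-1) := by omega
      exact_mod_cast h
    have h4 : (0:ℝ) < (m.choose (k-1) : ℝ) := by
      exact_mod_cast Nat.choose_pos (by omega)
    positivity

/-- structural properties of symmetric non-trivial equilibria. -/
theorem stmt2 (n B : ℕ) (μ p τ : ℝ) (hB1 : 2 ≤ B) (hB2 : B ≤ n)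
    (hμ : μ ∈ Set.Ioo (0:ℝ) 1) (hp : p ∈ Set.Ioo (1/2 : ℝ) 1) (hτ : τ ∈ Set.Ioo (0:ℝ) 1)
    (lam psi : ℝ)
    (heq : IsSymmEq n B μ p τ lam psi) (hnt : NonTrivial n B μ p lam psi) :
    (0 < lam → psi = 1) ∧
    (psi < 1 → lam = 0) ∧
    (lam < 1 →
      phi (alphaL p lam psi) (n - 1) (B - 1) < phi (alphaH p lam psi) (n - 1) (B - 1)) ∧
    (lam = 1 →
      phi (alphaH p lam psi) (n - 1) (B - 1) = 1 ∧
      phi (alphaL p lam psi) (n - 1) (B - 1) = 1) := by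
  obtain ⟨⟨hl0, hl1⟩, ⟨hs0, hs1⟩, hUl0, hUl1, hUh0, hUh1⟩ := heq
  obtain ⟨hμ0, hμ1⟩ := hμ
  obtain ⟨hp0, hp1⟩ := hp
  obtain ⟨hτ0, hτ1⟩ := hτ
  have hp2 : (0:ℝ) < p := by linarith
  have hp3 : (0:ℝ) < 1 - p := by linarith
  have haH0 : 0 ≤ alphaH p lam psi := by unfold alphaH; nlinarith
  have haH1 : alphaH p lam psi ≤ 1 := by unfold alphaH; nlinarith
  have haL0 : 0 ≤ alphaL p lam psi := by unfold alphaL; nlinarith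
  have haL1 : alphaL p lam psi ≤ 1 := by unfold alphaL; nlinarith
  have haHpos : 0 < alphaH p lam psi := by
    rcases lt_or_eq_of_le haH0 with h | h
    · exact h
    · exfalso
      have hps : psi = 0 := by unfold alphaH at h; nlinarith
      have hlm : lam = 0 := by unfold alphaH at h; nlinarith
      have hL : alphaL p lam psi = 0 := by unfold alphaL; rw [hps, hlm]; ring
      rw [NonTrivial, hL, ← h, phi_zero (by omega : 1 ≤ B)] at hnt
      norm_num at hnt
  have hq : pLow μ p < pHigh μ p := by
    have hdl : (0:ℝ) < (1-p)*μ + p*(1-μ) := by nlinarith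
    have hdh : (0:ℝ) < p*μ + (1-p)*(1-μ) := by nlinarith
    rw [pLow, pHigh, div_lt_div_iff₀ hdl hdh]
    nlinarith [mul_pos (mul_pos hμ0 (by linarith : (0:ℝ) < 1-μ)) (by linarith : (0:ℝ) < 2*p-1)]
  have claim1 : 0 < lam → psi = 1 := by
    intro hlam
    by_contra hpsi
    have hpsi' : psi < 1 := lt_of_le_of_ne hs1 hpsi
    have h1 := hUl0 hlam
    have h2 := hUh1 hpsi'
    have hφH : 0 < phi (alphaH p lam psi) (n-1) (B-1) := phi_pos haHpos haH1 (by omega)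
    have hφL : 0 ≤ phi (alphaL p lam psi) (n-1) (B-1) := phi_nonneg haL0 haL1 _ _
    have hd : Uhigh n B μ p τ lam psi - Ulow n B μ p τ lam psi
        = (pHigh μ p - pLow μ p) * ((1-τ) * phi (alphaH p lam psi) (n-1) (B-1)
            + τ * phi (alphaL p lam psi) (n-1) (B-1)) := by
      unfold Uhigh Ulow; ring
    have hAB : 0 < (1-τ) * phi (alphaH p lam psi) (n-1) (B-1)
            + τ * phi (alphaL p lam psi) (n-1) (B-1) :=
      add_pos_of_pos_of_nonneg (mul_pos (by linarith) hφH) (mul_nonneg hτ0.le hφL)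
    have hpos : 0 < (pHigh μ p - pLow μ p) * ((1-τ) * phi (alphaH p lam psi) (n-1) (B-1)
            + τ * phi (alphaL p lam psi) (n-1) (B-1)) :=
      mul_pos (sub_pos.mpr hq) hAB
    linarith
  have claim2 : psi < 1 → lam = 0 := by
    intro hpsi
    by_contra hlam
    have h1 : 0 < lam := lt_of_le_of_ne hl0 (Ne.symm hlam)
    have := claim1 h1
    linarith
  have hpsipos : 0 < psi := by
    rcases lt_or_eq_of_le hs0 with h | h
    · exact h
    · exfalso
      have hlam0 : lam = 0 := by
        by_contra hl
        have h1 : 0 < lam := lt_of_le_of_ne hl0 (Ne.symm hl)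
        have h2 := claim1 h1
        rw [← h] at h2; norm_num at h2
      rw [← h, hlam0] at haHpos
      unfold alphaH at haHpos
      norm_num at haHpos
  refine ⟨claim1, claim2, ?_, ?_⟩
  · intro hlam
    have hlt : lam < psi := by
      rcases lt_or_ge psi 1 with h | h
      · rw [claim2 h]; exact hpsipos
      · have hpsi1 : psi = 1 := le_antisymm hs1 h
        rw [hpsi1]; exact hlam
    have hαlt : alphaL p lam psi < alphaH p lam psi := by
      have hdiff : alphaH p lam psi - alphaL p lam psi = (2*p-1)*(psi-lam) := by
        unfold alphaL alphaH; ring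
      have hprod : 0 < (2*p-1)*(psi-lam) :=
        mul_pos (by linarith) (by linarith)
      linarith
    exact phi_strictMonoOn (by omega) (by omega) ⟨haL0, haL1⟩ ⟨haH0, haH1⟩ hαlt
  · intro hlam
    have hpsi1 : psi = 1 := claim1 (by rw [hlam]; norm_num)
    have e1 : alphaH p lam psi = 1 := by unfold alphaH; rw [hlam, hpsi1]; ring
    have e2 : alphaL p lam psi = 1 := by unfold alphaL; rw [hlam, hpsi1]; ring
    rw [e1, e2]
    exact ⟨phi_one (by omega), phi_one (by omega)⟩
end

section
/- Let γ ∈ (0,1) be fixed and let {B_n} be any sequence of integers with 1 ≤ B_n ≤ n. Then lim_{n→∞} ( φ(γ, n−1, B_n−1) − φ(γ, n, B_n) ) = 0; i.e., asymptotically each player is non-pivotal: the probability that a Binomial(n−1,γ) variable is at least B_n−1 and the probability that a Binomial(n,γ) variable is at least B_n have the same limit behavior. -/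
open Finset Filter

section Aux
open Nat




noncomputable def fb (γ : ℝ) (m k : ℕ) : ℝ := (m.choose k : ℝ) * γ ^ k * (1 - γ) ^ (m - k)

lemma phi_split (γ : ℝ) (m k : ℕ) (hk : k ≤ m) : phi γ m k = fb γ m k + phi γ m (k + 1) := by
  unfold phi fb
  rw [Finset.Icc_add_one_left_eq_Ioc, ← Finset.Ioc_insert_left hk, Finset.sum_insert (by simp)]

lemma phi_succ_succ (γ : ℝ) (m k : ℕ) (hk : k ≤ m) :
    phi γ (m + 1) (k + 1) = γ * phi γ m k + (1 - γ) * phi γ m (k + 1) := by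
  unfold phi
  have himg : Finset.Icc (k + 1) (m + 1) = (Finset.Icc k m).image (· + 1) := by
    rw [Finset.image_add_right_Icc]
  have hinj : ∀ a ∈ Finset.Icc k m, ∀ b ∈ Finset.Icc k m, a + 1 = b + 1 → a = b := by
    intro a _ b _ h; omega
  rw [himg, Finset.sum_image hinj]
  have : ∀ j ∈ Finset.Icc k m,
      ((m + 1).choose (j + 1) : ℝ) * γ ^ (j + 1) * (1 - γ) ^ (m + 1 - (j + 1))
      = γ * ((m.choose j : ℝ) * γ ^ j * (1 - γ) ^ (m - j))
        + ((m.choose (j + 1) : ℝ) * γ ^ (j + 1) * (1 - γ) ^ (m + 1 - (j + 1))) := by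
    intro j hj
    rw [Nat.choose_succ_succ, Nat.cast_add]
    have : m + 1 - (j + 1) = m - j := by omega
    rw [this]; ring
  rw [Finset.sum_congr rfl this, Finset.sum_add_distrib, Finset.mul_sum]
  congr 1
  have h3 : ∑ x ∈ Finset.Icc k m, ((m.choose (x+1) : ℝ) * γ ^ (x+1) * (1 - γ) ^ (m + 1 - (x+1)))
      = ∑ x ∈ (Finset.Icc k m).image (· + 1), ((m.choose x : ℝ) * γ ^ x * (1 - γ) ^ (m + 1 - x)) :=
    (Finset.sum_image (f := fun x => (m.choose x : ℝ) * γ ^ x * (1 - γ) ^ (m + 1 - x)) hinj).symm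
  rw [h3, ← himg]
  have h2 : Finset.Icc (k + 1) (m + 1) = insert (m + 1) (Finset.Icc (k + 1) m) := by
    rw [← Finset.insert_Icc_right_eq_Icc_add_one (by omega : k + 1 ≤ m + 1)]
  rw [h2, Finset.sum_insert (by simp), Nat.choose_succ_self, Finset.mul_sum]
  simp only [Nat.cast_zero, zero_mul, zero_add]
  apply Finset.sum_congr rfl
  intro j hj
  simp only [Finset.mem_Icc] at hj
  have : m + 1 - j = (m - j) + 1 := by omega
  rw [this]; ring

lemma phi_diff (γ : ℝ) (m k : ℕ) (hk : k ≤ m) :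
    phi γ m k - phi γ (m + 1) (k + 1) = (1 - γ) * fb γ m k := by
  rw [phi_succ_succ γ m k hk, phi_split γ m k hk]; ring



variable {γ : ℝ}

lemma fb_nonneg (h0 : 0 ≤ γ) (h1 : γ ≤ 1) (m k : ℕ) : 0 ≤ fb γ m k := by
  unfold fb
  have : (0:ℝ) ≤ 1 - γ := by linarith
  positivity

lemma fb_step_up (h0 : 0 < γ) (h1 : γ < 1) {m j : ℕ} (h : (j : ℝ) + 1 ≤ γ * (m + 1)) :
    fb γ m j ≤ fb γ m (j + 1) := by
  have hjm : j < m := by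
    have : (j : ℝ) + 1 < (m : ℝ) + 1 := lt_of_le_of_lt h (by nlinarith)
    exact_mod_cast (by linarith : (j:ℝ) < m)
  have hch : ((m.choose (j+1) : ℝ)) * ((j:ℝ)+1) = (m.choose j : ℝ) * ((m:ℝ) - j) := by
    have := Nat.choose_succ_right_eq m j
    have hc : ((m - j : ℕ) : ℝ) = (m:ℝ) - j := by
      rw [Nat.cast_sub hjm.le]
    calc ((m.choose (j+1) : ℝ)) * ((j:ℝ)+1) = ((m.choose (j+1) * (j+1) : ℕ) : ℝ) := by push_cast; ring
      _ = ((m.choose j * (m - j) : ℕ) : ℝ) := by rw [this]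
      _ = (m.choose j : ℝ) * ((m:ℝ) - j) := by push_cast [hc]; ring
  have key : (m.choose j : ℝ) * (1 - γ) ≤ (m.choose (j+1) : ℝ) * γ := by
    rw [← mul_le_mul_iff_of_pos_right (by positivity : (0:ℝ) < (j:ℝ)+1)]
    have h1' : (1-γ) * ((j:ℝ)+1) ≤ γ * ((m:ℝ) - j) := by nlinarith
    calc (m.choose j : ℝ) * (1-γ) * ((j:ℝ)+1) = (m.choose j : ℝ) * ((1-γ) * ((j:ℝ)+1)) := by ring
      _ ≤ (m.choose j : ℝ) * (γ * ((m:ℝ) - j)) := by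
          apply mul_le_mul_of_nonneg_left h1' (by positivity)
      _ = (m.choose (j+1) : ℝ) * γ * ((j:ℝ)+1) := by rw [← mul_assoc, mul_comm _ γ, mul_assoc, ← hch]; ring
  unfold fb
  rw [show m - j = (m - (j+1)) + 1 by omega, pow_succ]
  have hA : (0:ℝ) ≤ γ ^ j * (1 - γ) ^ (m - (j+1)) := by
    have : (0:ℝ) ≤ 1 - γ := by linarith
    positivity
  calc (m.choose j : ℝ) * γ ^ j * ((1-γ) ^ (m-(j+1)) * (1-γ))
      = ((m.choose j : ℝ) * (1-γ)) * (γ ^ j * (1-γ) ^ (m-(j+1))) := by ring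
    _ ≤ ((m.choose (j+1) : ℝ) * γ) * (γ ^ j * (1-γ) ^ (m-(j+1))) := mul_le_mul_of_nonneg_right key hA
    _ = (m.choose (j+1) : ℝ) * γ ^ (j+1) * (1-γ) ^ (m-(j+1)) := by ring

lemma fb_step_down (h0 : 0 < γ) (h1 : γ < 1) {m j : ℕ} (h : γ * (m + 1) ≤ (j : ℝ) + 1) :
    fb γ m (j + 1) ≤ fb γ m j := by
  rcases le_or_gt m j with hm | hjm
  · have : fb γ m (j+1) = 0 := by
      unfold fb
      rw [Nat.choose_eq_zero_of_lt (by omega)]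
      simp
    rw [this]; exact fb_nonneg h0.le h1.le m j
  · have hch : ((m.choose (j+1) : ℝ)) * ((j:ℝ)+1) = (m.choose j : ℝ) * ((m:ℝ) - j) := by
      have := Nat.choose_succ_right_eq m j
      have hc : ((m - j : ℕ) : ℝ) = (m:ℝ) - j := by rw [Nat.cast_sub hjm.le]
      calc ((m.choose (j+1) : ℝ)) * ((j:ℝ)+1) = ((m.choose (j+1) * (j+1) : ℕ) : ℝ) := by push_cast; ring
        _ = ((m.choose j * (m - j) : ℕ) : ℝ) := by rw [this]
        _ = (m.choose j : ℝ) * ((m:ℝ) - j) := by push_cast [hc]; ring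
    have key : (m.choose (j+1) : ℝ) * γ ≤ (m.choose j : ℝ) * (1 - γ) := by
      rw [← mul_le_mul_iff_of_pos_right (by positivity : (0:ℝ) < (j:ℝ)+1)]
      have h1' : γ * ((m:ℝ) - j) ≤ (1-γ) * ((j:ℝ)+1) := by nlinarith
      calc (m.choose (j+1) : ℝ) * γ * ((j:ℝ)+1) = γ * ((m.choose (j+1) : ℝ) * ((j:ℝ)+1)) := by ring
        _ = (m.choose j : ℝ) * (γ * ((m:ℝ) - j)) := by rw [hch]; ring
        _ ≤ (m.choose j : ℝ) * ((1-γ) * ((j:ℝ)+1)) := by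
            apply mul_le_mul_of_nonneg_left h1' (by positivity)
        _ = (m.choose j : ℝ) * (1-γ) * ((j:ℝ)+1) := by ring
    unfold fb
    rw [show m - j = (m - (j+1)) + 1 by omega, pow_succ]
    have hA : (0:ℝ) ≤ γ ^ j * (1 - γ) ^ (m - (j+1)) := by
      have : (0:ℝ) ≤ 1 - γ := by linarith
      positivity
    calc (m.choose (j+1) : ℝ) * γ ^ (j+1) * (1-γ) ^ (m-(j+1))
        = ((m.choose (j+1) : ℝ) * γ) * (γ ^ j * (1-γ) ^ (m-(j+1))) := by ring
      _ ≤ ((m.choose j : ℝ) * (1-γ)) * (γ ^ j * (1-γ) ^ (m-(j+1))) := mul_le_mul_of_nonneg_right key hA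
      _ = (m.choose j : ℝ) * γ ^ j * ((1-γ) ^ (m-(j+1)) * (1-γ)) := by ring

lemma fb_le_mode (h0 : 0 < γ) (h1 : γ < 1) (m k : ℕ) :
    fb γ m k ≤ fb γ m (⌊γ * (m + 1)⌋₊) := by
  set K := ⌊γ * (m + 1)⌋₊ with hK
  have hK1 : (K : ℝ) ≤ γ * (m + 1) := Nat.floor_le (by positivity)
  have hK2 : γ * (m + 1) < (K : ℝ) + 1 := Nat.lt_floor_add_one _
  have up : ∀ i, i ≤ K → fb γ m (K - i) ≤ fb γ m K := by
    intro i
    induction i with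
    | zero => intro _; simp
    | succ i ih =>
      intro hi
      have h2 : K - (i+1) + 1 = K - i := by omega
      have step : fb γ m (K - (i+1)) ≤ fb γ m (K - (i+1) + 1) := by
        apply fb_step_up h0 h1
        have : ((K - (i+1) : ℕ) : ℝ) + 1 ≤ (K : ℝ) := by
          have : K - (i+1) + 1 ≤ K := by omega
          exact_mod_cast this
        linarith
      rw [h2] at step
      exact step.trans (ih (by omega))
  have down : ∀ i, fb γ m (K + i) ≤ fb γ m K := by
    intro i
    induction i with
    | zero => simp
    | succ i ih =>
      have step : fb γ m (K + i + 1) ≤ fb γ m (K + i) := by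
        apply fb_step_down h0 h1
        have : ((K + i : ℕ) : ℝ) = (K:ℝ) + i := by push_cast; ring
        rw [this]
        have : (0:ℝ) ≤ (i:ℝ) := Nat.cast_nonneg i
        linarith
      exact (by rw [show K + (i+1) = K + i + 1 by omega]; exact step.trans ih)
  rcases le_or_gt k K with hk | hk
  · have := up (K - k) (by omega)
    rwa [show K - (K - k) = k by omega] at this
  · have := down (k - K)
    rwa [show K + (k - K) = k by omega] at this



lemma factorial_bounds {a : ℝ} (ha : ∀ n : ℕ, a ≤ Stirling.stirlingSeq (n + 1)) {n : ℕ}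
    (hn : 1 ≤ n) :
    a * (Real.sqrt (2 * n) * ((n : ℝ) / Real.exp 1) ^ n) ≤ (n ! : ℝ) ∧
      (n ! : ℝ) ≤ Stirling.stirlingSeq 1 * (Real.sqrt (2 * n) * ((n : ℝ) / Real.exp 1) ^ n) := by
  obtain ⟨k, rfl⟩ : ∃ k, n = k + 1 := ⟨n - 1, by omega⟩
  have hnp : (0:ℝ) < ((k+1 : ℕ) : ℝ) := by positivity
  have hd : (0:ℝ) < Real.sqrt (2 * (k+1 : ℕ)) * (((k+1 : ℕ) : ℝ) / Real.exp 1) ^ (k+1) := by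
    positivity
  have hdef : Stirling.stirlingSeq (k+1)
      = ((k+1)! : ℝ) / (Real.sqrt (2 * (k+1 : ℕ)) * (((k+1 : ℕ) : ℝ) / Real.exp 1) ^ (k+1)) := by
    rfl
  have hub : Stirling.stirlingSeq (k+1) ≤ Stirling.stirlingSeq 1 :=
    Stirling.stirlingSeq'_antitone (Nat.zero_le k)
  constructor
  · have := ha k
    rw [hdef, le_div_iff₀ hd] at this
    exact this
  · have := hub
    rw [hdef, div_le_iff₀ hd] at this
    exact this

lemma mode_bound (γ : ℝ) (h0 : 0 < γ) (h1 : γ < 1) :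
    ∃ C : ℝ, 0 < C ∧ ∀ᶠ m : ℕ in atTop, fb γ m (⌊γ * ((m:ℝ) + 1)⌋₊) ≤ C / Real.sqrt m := by
  obtain ⟨a, ha0, ha⟩ := Stirling.stirlingSeq'_bounded_by_pos_constant
  set b := Stirling.stirlingSeq 1 with hb
  have hb0 : 0 < b := lt_of_lt_of_le ha0 (ha 0)
  have h1γ : (0:ℝ) < 1 - γ := by linarith
  refine ⟨(b / a ^ 2) * Real.sqrt (2 / (γ * (1 - γ))), by positivity, ?_⟩
  have hev : ∀ᶠ m : ℕ in atTop, (2:ℝ) ≤ γ * m ∧ (2:ℝ) ≤ (1 - γ) * m := by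
    have l1 : Tendsto (fun m : ℕ => γ * m) atTop atTop :=
      Tendsto.const_mul_atTop h0 tendsto_natCast_atTop_atTop
    have l2 : Tendsto (fun m : ℕ => (1 - γ) * m) atTop atTop :=
      Tendsto.const_mul_atTop h1γ tendsto_natCast_atTop_atTop
    exact (l1.eventually_ge_atTop 2).and (l2.eventually_ge_atTop 2)
  filter_upwards [hev] with m ⟨hm1, hm2⟩
  have hm0 : (0:ℝ) < m := by nlinarith
  set K := ⌊γ * ((m:ℝ) + 1)⌋₊ with hKdef
  have hK1 : (K : ℝ) ≤ γ * (m + 1) := Nat.floor_le (by positivity)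
  have hK2 : γ * ((m:ℝ) + 1) < (K : ℝ) + 1 := Nat.lt_floor_add_one _
  have hKlb : γ * m / 2 ≤ (K : ℝ) := by nlinarith
  have hKpos : 1 ≤ K := by
    have : (1:ℝ) ≤ (K:ℝ) := by nlinarith
    exact_mod_cast this
  have hKltm : (K:ℝ) < (m:ℝ) := by nlinarith
  have hKm : K ≤ m := by
    have : K < m := by exact_mod_cast hKltm
    omega
  set J := m - K with hJdef
  have hJcast : (J : ℝ) = (m:ℝ) - (K:ℝ) := by
    rw [hJdef, Nat.cast_sub hKm]
  have hJ1 : 1 ≤ J := by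
    have : (1:ℝ) ≤ (J:ℝ) := by rw [hJcast]; nlinarith
    exact_mod_cast this
  have hJlb : (1 - γ) * m / 2 ≤ (J : ℝ) := by rw [hJcast]; nlinarith
  have hKJ : K + J = m := by omega
  clear_value K J
  -- factorial bounds
  obtain ⟨hKlow, -⟩ := factorial_bounds ha hKpos
  obtain ⟨hJlow, -⟩ := factorial_bounds ha hJ1
  obtain ⟨-, hmup⟩ := factorial_bounds ha (le_trans hKpos hKm)
  have hKr : (0:ℝ) < (K:ℝ) := by positivity
  have hJr : (0:ℝ) < (J:ℝ) := by positivity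
  set SK := Real.sqrt (2 * K) * ((K : ℝ) / Real.exp 1) ^ K with hSK
  set SJ := Real.sqrt (2 * J) * ((J : ℝ) / Real.exp 1) ^ J with hSJ
  set Sm := Real.sqrt (2 * m) * ((m : ℝ) / Real.exp 1) ^ m with hSm
  have hSKpos : 0 < SK := by rw [hSK]; positivity
  have hSJpos : 0 < SJ := by rw [hSJ]; positivity
  have hSmpos : 0 < Sm := by rw [hSm]; positivity
  clear_value SK SJ Sm
  -- step 1 : choose bound
  have hchoose : (m.choose K : ℝ) ≤ b * Sm / (a * SK * (a * SJ)) := by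
    rw [Nat.cast_choose (K := ℝ) hKm]
    rw [← hJdef]
    apply div_le_div₀ (by positivity) hmup (by positivity)
    have h3 : (0:ℝ) ≤ a * SK := by positivity
    calc a * SK * (a * SJ) ≤ a * SK * (J ! : ℝ) := by
          apply mul_le_mul_of_nonneg_left hJlow h3
      _ ≤ (K ! : ℝ) * (J ! : ℝ) := by
          apply mul_le_mul_of_nonneg_right hKlow (by positivity)
  -- step 2 : fb in terms of the bound
  have hfb : fb γ m K = (m.choose K : ℝ) * (γ ^ K * (1 - γ) ^ J) := by
    rw [hJdef]; unfold fb; ring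
  have hpow_nonneg : (0:ℝ) ≤ γ ^ K * (1 - γ) ^ J := by positivity
  have step1 : fb γ m K ≤ b * Sm / (a * SK * (a * SJ)) * (γ ^ K * (1 - γ) ^ J) := by
    rw [hfb]
    exact mul_le_mul_of_nonneg_right hchoose hpow_nonneg
  -- step 3 : rearrange
  set x := γ * m / (K : ℝ) with hx
  set y := (1 - γ) * m / (J : ℝ) with hy
  have hxpos : 0 < x := by rw [hx]; positivity
  have hypos : 0 < y := by rw [hy]; positivity
  have hexp : (0:ℝ) < Real.exp 1 := Real.exp_pos 1
  clear_value x y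
  have heq : b * Sm / (a * SK * (a * SJ)) * (γ ^ K * (1 - γ) ^ J)
      = (b / a ^ 2) * (Real.sqrt (2 * m) / (Real.sqrt (2 * K) * Real.sqrt (2 * J)))
        * (((m:ℝ) / Real.exp 1) ^ m * (γ ^ K * (1 - γ) ^ J)
            / (((K:ℝ) / Real.exp 1) ^ K * ((J:ℝ) / Real.exp 1) ^ J)) := by
    rw [hSm, hSK, hSJ]
    have s1 : Real.sqrt (2 * (K:ℝ)) ≠ 0 := by positivity
    have s2 : Real.sqrt (2 * (J:ℝ)) ≠ 0 := by positivity
    have s3 : ((K:ℝ) / Real.exp 1) ^ K ≠ 0 := by positivity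
    have s4 : ((J:ℝ) / Real.exp 1) ^ J ≠ 0 := by positivity
    field_simp
  have hGeq : ((m:ℝ) / Real.exp 1) ^ m * (γ ^ K * (1 - γ) ^ J)
      / (((K:ℝ) / Real.exp 1) ^ K * ((J:ℝ) / Real.exp 1) ^ J) = x ^ K * y ^ J := by
    rw [hx, hy]
    rw [show ((m:ℝ) / Real.exp 1) ^ m = ((m:ℝ) / Real.exp 1) ^ K * ((m:ℝ) / Real.exp 1) ^ J by
      rw [← pow_add, hKJ]]
    field_simp
    rw [div_pow, div_pow, div_pow, div_pow, div_pow, div_pow, mul_pow, mul_pow]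
    field_simp
  -- step 4 : AM-GM gives x ^ K * y ^ J ≤ 1
  have hGle1 : x ^ K * y ^ J ≤ 1 := by
    have hw : (K:ℝ)/m + (J:ℝ)/m = 1 := by
      rw [hJcast]; field_simp; ring
    have hgm : x ^ ((K:ℝ)/m) * y ^ ((J:ℝ)/m) ≤ ((K:ℝ)/m) * x + ((J:ℝ)/m) * y :=
      Real.geom_mean_le_arith_mean2_weighted (by positivity) (by positivity)
        hxpos.le hypos.le hw
    have hsum : ((K:ℝ)/m) * x + ((J:ℝ)/m) * y = 1 := by
      rw [hx, hy]; field_simp; ring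
    have hle1 : x ^ ((K:ℝ)/m) * y ^ ((J:ℝ)/m) ≤ 1 := by rw [← hsum]; exact hgm
    have hbase : (0:ℝ) ≤ x ^ ((K:ℝ)/m) * y ^ ((J:ℝ)/m) := by positivity
    have h5 : (x ^ ((K:ℝ)/m) * y ^ ((J:ℝ)/m)) ^ (m:ℕ) ≤ 1 := by
      calc (x ^ ((K:ℝ)/m) * y ^ ((J:ℝ)/m)) ^ (m:ℕ) ≤ 1 ^ (m:ℕ) :=
            pow_le_pow_left₀ hbase hle1 m
        _ = 1 := one_pow m
    have h6 : (x ^ ((K:ℝ)/m) * y ^ ((J:ℝ)/m)) ^ (m:ℕ) = x ^ K * y ^ J := by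
      rw [mul_pow, ← Real.rpow_natCast (x ^ ((K:ℝ)/m)) m,
        ← Real.rpow_natCast (y ^ ((J:ℝ)/m)) m,
        ← Real.rpow_mul hxpos.le, ← Real.rpow_mul hypos.le,
        div_mul_cancel₀ _ (ne_of_gt hm0), div_mul_cancel₀ _ (ne_of_gt hm0),
        Real.rpow_natCast, Real.rpow_natCast]
    rw [← h6]; exact h5
  -- step 5 : sqrt factor bound
  have hsqrt : Real.sqrt (2 * m) / (Real.sqrt (2 * K) * Real.sqrt (2 * J))
      ≤ Real.sqrt (2 / (γ * (1 - γ))) / Real.sqrt m := by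
    rw [← Real.sqrt_mul (by positivity : (0:ℝ) ≤ 2 * (K:ℝ)),
      ← Real.sqrt_div (by positivity : (0:ℝ) ≤ 2 * (m:ℝ)),
      ← Real.sqrt_div (by positivity : (0:ℝ) ≤ 2 / (γ * (1 - γ)))]
    apply Real.sqrt_le_sqrt
    rw [div_div]
    rw [div_le_div_iff₀ (by positivity) (by positivity)]
    have hprod : (γ * m / 2) * ((1 - γ) * m / 2) ≤ (K:ℝ) * (J:ℝ) :=
      mul_le_mul hKlb hJlb (by positivity) (by positivity)
    have e1 : 2*(m:ℝ)*(γ*(1-γ)*(m:ℝ)) = 8*((γ*(m:ℝ)/2)*((1-γ)*(m:ℝ)/2)) := by ring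
    have e2 : 2*(2*(K:ℝ)*(2*(J:ℝ))) = 8*((K:ℝ)*(J:ℝ)) := by ring
    rw [e1, e2]
    linarith [hprod]
  -- combine
  have hQ : (0:ℝ) ≤ Real.sqrt (2 * m) / (Real.sqrt (2 * K) * Real.sqrt (2 * J)) := by positivity
  have hfinal : fb γ m K ≤ (b / a ^ 2)
      * (Real.sqrt (2 / (γ * (1 - γ))) / Real.sqrt m) := by
    calc fb γ m K ≤ b * Sm / (a * SK * (a * SJ)) * (γ ^ K * (1 - γ) ^ J) := step1
      _ = (b / a ^ 2) * (Real.sqrt (2 * m) / (Real.sqrt (2 * K) * Real.sqrt (2 * J)))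
            * (x ^ K * y ^ J) := by rw [heq, hGeq]
      _ ≤ (b / a ^ 2) * (Real.sqrt (2 * m) / (Real.sqrt (2 * K) * Real.sqrt (2 * J))) * 1 := by
            apply mul_le_mul_of_nonneg_left hGle1 (by positivity)
      _ = (b / a ^ 2) * (Real.sqrt (2 * m) / (Real.sqrt (2 * K) * Real.sqrt (2 * J))) := by ring
      _ ≤ (b / a ^ 2) * (Real.sqrt (2 / (γ * (1 - γ))) / Real.sqrt m) := by
            apply mul_le_mul_of_nonneg_left hsqrt (by positivity)
  calc fb γ m K ≤ (b / a ^ 2) * (Real.sqrt (2 / (γ * (1 - γ))) / Real.sqrt m) := hfinal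
    _ = (b / a ^ 2) * Real.sqrt (2 / (γ * (1 - γ))) / Real.sqrt m := by ring

end Aux

/-- asymptotic non-pivotality. -/
theorem stmt18 (γ : ℝ) (hγ : γ ∈ Set.Ioo (0:ℝ) 1) (B : ℕ → ℕ)
    (hB : ∀ n, 1 ≤ n → 1 ≤ B n ∧ B n ≤ n) :
    Filter.Tendsto (fun n : ℕ => phi γ (n - 1) (B n - 1) - phi γ n (B n))
      Filter.atTop (nhds 0) := by
  obtain ⟨h0, h1⟩ := hγ
  obtain ⟨C, hC0, hmode⟩ := mode_bound γ h0 h1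
  have hmode' : ∀ᶠ n : ℕ in atTop,
      fb γ (n - 1) (⌊γ * (((n - 1 : ℕ) : ℝ) + 1)⌋₊) ≤ C / Real.sqrt ((n - 1 : ℕ)) :=
    (tendsto_sub_atTop_nat 1).eventually hmode
  have hident : ∀ n : ℕ, 1 ≤ n →
      phi γ (n - 1) (B n - 1) - phi γ n (B n) = (1 - γ) * fb γ (n - 1) (B n - 1) := by
    intro n hn
    obtain ⟨hB1, hB2⟩ := hB n hn
    have e1 : n = (n - 1) + 1 := by omega
    have e2 : B n = (B n - 1) + 1 := by omega
    calc phi γ (n - 1) (B n - 1) - phi γ n (B n)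
        = phi γ (n - 1) (B n - 1) - phi γ ((n - 1) + 1) ((B n - 1) + 1) := by rw [← e1, ← e2]
      _ = (1 - γ) * fb γ (n - 1) (B n - 1) := phi_diff γ (n - 1) (B n - 1) (by omega)
  apply squeeze_zero' (g := fun n : ℕ => C / Real.sqrt ((n - 1 : ℕ)))
  · filter_upwards [eventually_ge_atTop 1] with n hn
    rw [hident n hn]
    exact mul_nonneg (by linarith) (fb_nonneg h0.le h1.le _ _)
  · filter_upwards [eventually_ge_atTop 1, hmode'] with n hn hm
    rw [hident n hn]
    calc (1 - γ) * fb γ (n - 1) (B n - 1) ≤ 1 * fb γ (n - 1) (B n - 1) :=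
          mul_le_mul_of_nonneg_right (by linarith) (fb_nonneg h0.le h1.le _ _)
      _ = fb γ (n - 1) (B n - 1) := one_mul _
      _ ≤ fb γ (n - 1) (⌊γ * (((n - 1 : ℕ) : ℝ) + 1)⌋₊) := fb_le_mode h0 h1 _ _
      _ ≤ C / Real.sqrt ((n - 1 : ℕ)) := hm
  · have hsq : Tendsto (fun m : ℕ => Real.sqrt m) atTop atTop := by
      have h := (tendsto_rpow_atTop (by norm_num : (0:ℝ) < 1/2)).comp
        tendsto_natCast_atTop_atTop
      refine h.congr fun m => ?_
      simp [Function.comp, Real.sqrt_eq_rpow]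
    have hdiv : Tendsto (fun m : ℕ => C / Real.sqrt m) atTop (nhds 0) :=
      Tendsto.div_atTop tendsto_const_nhds hsq
    exact hdiv.comp (tendsto_sub_atTop_nat 1)
end
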